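/- The function a ↦ h(1/2 − √(a(1−a))), where h(t) = −t·log t − (1−t)·log(1−t) is the binary entropy function, is convex on the interval [1/2, 1]. -/

import Mathlib

open Real Set

private lemma aux_log_ineq {u : ℝ} (h0 : 0 ≤ u) (h1 : u < 1) :
    2 * u ≤ Real.log (1 + u) - Real.log (1 - u) := by
  set G : ℝ → ℝ := fun x => Real.log (1 + x) - Real.log (1 - x) - 2 * x with hG
  have key : ∀ x ∈ Ioo (0:ℝ) 1, HasDerivAt G ((0+1)/(1+x) - (0-1)/(1-x) - 2*1) x := by
    intro x hx
    have h1x : (1:ℝ) + x ≠ 0 := by nlinarith [hx.1]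
    have h2x : (1:ℝ) - x ≠ 0 := by nlinarith [hx.2]
    exact ((((hasDerivAt_const x (1:ℝ)).add (hasDerivAt_id x)).log h1x).sub
      (((hasDerivAt_const x (1:ℝ)).sub (hasDerivAt_id x)).log h2x)).sub
      ((hasDerivAt_id x).const_mul 2)
  have mono : MonotoneOn G (Ico (0:ℝ) 1) := by
    apply monotoneOn_of_deriv_nonneg (convex_Ico 0 1)
    · apply ContinuousOn.sub
      apply ContinuousOn.sub
      · exact ContinuousOn.log (by fun_prop) (fun x hx => by nlinarith [hx.1])
      · exact ContinuousOn.log (by fun_prop) (fun x hx => by nlinarith [hx.2])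
      · fun_prop
    · rw [interior_Ico]
      exact fun x hx => ((key x hx).differentiableAt).differentiableWithinAt
    · rw [interior_Ico]
      intro x hx
      rw [(key x hx).deriv]
      have h1x : (0:ℝ) < 1 + x := by linarith [hx.1]
      have h2x : (0:ℝ) < 1 - x := by linarith [hx.2]
      have h : (0+1)/(1+x) - (0-1)/(1-x) - 2*1 = 2*x^2/((1+x)*(1-x)) := by
        field_simp; ring
      rw [h]; positivity
  have h := mono (show (0:ℝ) ∈ Ico (0:ℝ) 1 by constructor <;> norm_num) ⟨h0, h1⟩ h0
  simp only [hG] at h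
  norm_num at h
  linarith

theorem convexOn_entanglement_of_formation_werner :
    ConvexOn ℝ (Set.Icc (1 / 2 : ℝ) 1)
      (fun a : ℝ => Real.binEntropy (1 / 2 - Real.sqrt (a * (1 - a)))) := by
  set f : ℝ → ℝ := fun a => Real.binEntropy (1 / 2 - Real.sqrt (a * (1 - a))) with hf
  set F' : ℝ → ℝ := fun a =>
    (Real.log (1/2 + Real.sqrt (a*(1-a))) - Real.log (1/2 - Real.sqrt (a*(1-a)))) *
      ((2*a-1)/(2 * Real.sqrt (a*(1-a)))) with hF'
  -- basic facts on the interior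
  have facts : ∀ a ∈ Ioo (1/2:ℝ) 1, 0 < Real.sqrt (a*(1-a)) ∧ Real.sqrt (a*(1-a)) < 1/2 := by
    intro a ha
    have hq : 0 < a * (1-a) := by nlinarith [ha.1, ha.2]
    have hs : 0 < Real.sqrt (a*(1-a)) := Real.sqrt_pos.mpr hq
    have hsq : Real.sqrt (a*(1-a)) ^ 2 = a*(1-a) := Real.sq_sqrt hq.le
    exact ⟨hs, by nlinarith [ha.1, ha.2]⟩
  have hS : ∀ a ∈ Ioo (1/2:ℝ) 1,
      HasDerivAt (fun x => Real.sqrt (x*(1-x)))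
        ((1-2*a) / (2 * Real.sqrt (a*(1-a)))) a := by
    intro a ha
    have hq : a * (1-a) ≠ 0 := by nlinarith [ha.1, ha.2]
    have h := ((hasDerivAt_id a).mul ((hasDerivAt_const a 1).sub (hasDerivAt_id a))).sqrt hq
    convert h using 1
    · rfl
    simp only [id_eq, Pi.sub_apply, Pi.mul_apply]
    ring
  -- derivative of f is F' on the interior
  have hA : ∀ a ∈ Ioo (1/2:ℝ) 1, HasDerivAt f (F' a) a := by
    intro a ha
    obtain ⟨hs, hs2⟩ := facts a ha
    have hg : HasDerivAt (fun x => 1/2 - Real.sqrt (x*(1-x)))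
        (0 - (1-2*a) / (2 * Real.sqrt (a*(1-a)))) a :=
      (hasDerivAt_const a (1/2:ℝ)).sub (hS a ha)
    have hg0 : (1:ℝ)/2 - Real.sqrt (a*(1-a)) ≠ 0 := by linarith
    have hg1 : (1:ℝ)/2 - Real.sqrt (a*(1-a)) ≠ 1 := by linarith
    have hcomp := (Real.hasDerivAt_binEntropy hg0 hg1).comp a hg
    have hfc : f = Real.binEntropy ∘ (fun x => 1/2 - Real.sqrt (x*(1-x))) := by
      funext x; rfl
    rw [hfc]
    convert hcomp using 1
    · rfl
    · rfl
    have h12 : (1:ℝ) - (1/2 - Real.sqrt (a*(1-a))) = 1/2 + Real.sqrt (a*(1-a)) := by ring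
    rw [h12, hF']
    ring
  -- derivative of F' on the interior
  have hB : ∀ a ∈ Ioo (1/2:ℝ) 1, HasDerivAt F'
      (((Real.log (1/2 + Real.sqrt (a*(1-a))) - Real.log (1/2 - Real.sqrt (a*(1-a))))
        - 4 * Real.sqrt (a*(1-a))) / (4 * Real.sqrt (a*(1-a)) ^ 3)) a := by
    intro a ha
    obtain ⟨hs, hs2⟩ := facts a ha
    have hq : 0 < a * (1-a) := by nlinarith [ha.1, ha.2]
    have hsq : Real.sqrt (a*(1-a)) ^ 2 = a*(1-a) := Real.sq_sqrt hq.le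
    have hS0 : Real.sqrt (a*(1-a)) ≠ 0 := ne_of_gt hs
    have h2a : (2:ℝ)*a - 1 ≠ 0 := by nlinarith [ha.1]
    have h1 : (1:ℝ)/2 + Real.sqrt (a*(1-a)) ≠ 0 := by linarith
    have h2 : (1:ℝ)/2 - Real.sqrt (a*(1-a)) ≠ 0 := by linarith
    set S := Real.sqrt (a*(1-a)) with hSdef
    -- derivative of the log part
    have hL : HasDerivAt (fun x => Real.log (1/2 + Real.sqrt (x*(1-x)))
        - Real.log (1/2 - Real.sqrt (x*(1-x)))) (-2 / (S * (2*a - 1))) a := by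
      have h := (((hasDerivAt_const a (1/2:ℝ)).add (hS a ha)).log h1).sub
        (((hasDerivAt_const a (1/2:ℝ)).sub (hS a ha)).log h2)
      convert h using 1
      · rfl
      · rfl
      · rfl
      simp only [Pi.add_apply, Pi.sub_apply]
      rw [← hSdef]
      rw [div_sub_div _ _ h1 h2]
      have key : ((1:ℝ)/2 + S) * (1/2 - S) = (2*a-1)^2/4 := by linear_combination -hsq
      rw [key]
      field_simp [hS0, h2a]
      ring
    -- derivative of the rational part
    have hR : HasDerivAt (fun x => (2*x-1)/(2 * Real.sqrt (x*(1-x))))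
        (1 / (4 * S^3)) a := by
      have hnum : HasDerivAt (fun x : ℝ => 2*x - 1) 2 a := by
        simpa using ((hasDerivAt_id a).const_mul 2).sub_const 1
      have hden : HasDerivAt (fun x => 2 * Real.sqrt (x*(1-x)))
          (2 * ((1-2*a) / (2 * S))) a := (hS a ha).const_mul 2
      have hden0 : 2 * S ≠ 0 := by positivity
      have h := hnum.div hden hden0
      convert h using 1
      · rfl
      · rfl
      · rfl
      rw [← hSdef]
      field_simp [hS0]
      linear_combination (-16) * hsq
    have h := hL.mul hR
    have hFeq : F' = fun x => (Real.log (1/2 + Real.sqrt (x*(1-x)))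
        - Real.log (1/2 - Real.sqrt (x*(1-x)))) * ((2*x-1)/(2 * Real.sqrt (x*(1-x)))) := rfl
    rw [hFeq]
    convert h using 1
    · rfl
    · rfl
    · rfl
    rw [← hSdef]
    field_simp [hS0, h2a]
    ring
  -- nonnegativity of the second derivative
  have hnn : ∀ a ∈ Ioo (1/2:ℝ) 1,
      0 ≤ ((Real.log (1/2 + Real.sqrt (a*(1-a))) - Real.log (1/2 - Real.sqrt (a*(1-a))))
        - 4 * Real.sqrt (a*(1-a))) / (4 * Real.sqrt (a*(1-a)) ^ 3) := by
    intro a ha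
    obtain ⟨hs, hs2⟩ := facts a ha
    set S := Real.sqrt (a*(1-a)) with hSdef
    have h1 : (1:ℝ)/2 + S = (1 + 2*S)/2 := by ring
    have h2 : (1:ℝ)/2 - S = (1 - 2*S)/2 := by ring
    have hlog := aux_log_ineq (u := 2*S) (by linarith) (by linarith)
    have e1 : Real.log ((1 + 2*S)/2) = Real.log (1 + 2*S) - Real.log 2 :=
      Real.log_div (by linarith) two_ne_zero
    have e2 : Real.log ((1 - 2*S)/2) = Real.log (1 - 2*S) - Real.log 2 :=
      Real.log_div (by linarith) two_ne_zero
    rw [h1, h2, e1, e2]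
    apply div_nonneg _ (by positivity)
    linarith
  -- assemble convexity
  apply MonotoneOn.convexOn_of_deriv (convex_Icc _ _)
  · have : Continuous f := by
      apply Real.binEntropy_continuous.comp
      fun_prop
    exact this.continuousOn
  · rw [interior_Icc]
    exact fun a ha => (hA a ha).differentiableAt.differentiableWithinAt
  · rw [interior_Icc]
    have monoF' : MonotoneOn F' (Ioo (1/2:ℝ) 1) := by
      apply monotoneOn_of_deriv_nonneg (convex_Ioo _ _)
      · exact fun a ha => (hB a ha).differentiableAt.continuousAt.continuousWithinAt
      · rw [interior_Ioo]
        exact fun a ha => (hB a ha).differentiableAt.differentiableWithinAt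
      · rw [interior_Ioo]
        intro a ha
        rw [(hB a ha).deriv]
        exact hnn a ha
    intro x hx y hy hxy
    rw [(hA x hx).deriv, (hA y hy).deriv]
    exact monoF' hx hy hxy
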